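/- (Contraction bound on the iteration matrix) Let 𝓛 be a symmetric positive semidefinite N×N real matrix, and let H be a symmetric N×N real matrix with μI ⪯ H ⪯ LI for constants 0 < μ ≤ L. Let α, β ≥ 0 satisfy αμ ≤ 1 and β‖𝓛‖ + α(L + μ) ≤ 2. Then the spectral norm satisfies ‖I − β𝓛 − αH‖ ≤ 1 − μα. -/

import Mathlib

open scoped Matrix

local notation "⟪" x ", " y "⟫" => @inner ℝ _ _ x y

lemma sym_op_norm_le {E : Type*} [NormedAddCommGroup E] [InnerProductSpace ℝ E]
    (T : E →L[ℝ] E) (hsym : ∀ x y : E, ⟪T x, y⟫ = ⟪x, T y⟫)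
    (c : ℝ) (hc : 0 ≤ c) (hq : ∀ x : E, |⟪x, T x⟫| ≤ c * ‖x‖ ^ 2) :
    ‖T‖ ≤ c := by
  apply ContinuousLinearMap.opNorm_le_bound _ hc
  intro x
  by_cases hTx : T x = 0
  · simp only [hTx, norm_zero]
    positivity
  have hTxn : (0:ℝ) < ‖T x‖ := norm_pos_iff.mpr hTx
  set v : E := (‖x‖ / ‖T x‖) • T x with hv
  have hvn : ‖v‖ = ‖x‖ := by
    rw [hv, norm_smul, Real.norm_eq_abs, abs_of_nonneg (by positivity)]
    field_simp
  have hTxv : ⟪T x, v⟫ = ‖x‖ * ‖T x‖ := by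
    rw [hv, real_inner_smul_right, real_inner_self_eq_norm_sq]
    field_simp
  have key : 4 * ⟪T x, v⟫ = ⟪x + v, T (x + v)⟫ - ⟪x - v, T (x - v)⟫ := by
    have h1 : T (x + v) = T x + T v := map_add T x v
    have h2 : T (x - v) = T x - T v := map_sub T x v
    have h3 : ⟪v, T x⟫ = ⟪T x, v⟫ := real_inner_comm _ _
    have h4 : ⟪x, T v⟫ = ⟪T v, x⟫ := real_inner_comm _ _
    have h5 := hsym v x
    simp only [h1, h2, inner_add_right, inner_add_left, inner_sub_right, inner_sub_left]
    linarith
  have hb1 := abs_le.mp (hq (x + v))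
  have hb2 := abs_le.mp (hq (x - v))
  have hpar : ‖x + v‖ ^ 2 + ‖x - v‖ ^ 2 = 2 * ‖x‖ ^ 2 + 2 * ‖v‖ ^ 2 := by
    rw [norm_add_sq_real, norm_sub_sq_real]; ring
  rw [hvn] at hpar
  have h6 : c * ‖x + v‖ ^ 2 + c * ‖x - v‖ ^ 2 = 4 * (c * ‖x‖ ^ 2) := by
    linear_combination c * hpar
  have h5 : 4 * (‖x‖ * ‖T x‖) ≤ 4 * (c * ‖x‖ ^ 2) := by linarith [hb1.2, hb2.1]
  by_cases hx : x = 0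
  · exact absurd (by simp [hx]) hTx
  · have hxn : (0:ℝ) < ‖x‖ := norm_pos_iff.mpr hx
    nlinarith

lemma inner_toEuclideanCLM (N : ℕ) (A : Matrix (Fin N) (Fin N) ℝ) (x y : EuclideanSpace ℝ (Fin N)) :
    ⟪x, Matrix.toEuclideanCLM (𝕜 := ℝ) (n := Fin N) A y⟫ =
      (WithLp.equiv 2 (Fin N → ℝ) x) ⬝ᵥ (A *ᵥ (WithLp.equiv 2 (Fin N → ℝ) y)) := by
  have h : Matrix.toEuclideanCLM (𝕜 := ℝ) (n := Fin N) A y =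
      (WithLp.equiv 2 (Fin N → ℝ)).symm (A *ᵥ (WithLp.equiv 2 (Fin N → ℝ) y)) := by
    rfl
  rw [h]
  simp [PiLp.inner_apply, dotProduct, RCLike.inner_apply, mul_comm]

/-- Contraction bound on the iteration matrix: if `𝓛 ⪰ 0` is symmetric, `μI ⪯ H ⪯ LI`,
`α, β ≥ 0`, `αμ ≤ 1`, and `β‖𝓛‖ + α(L + μ) ≤ 2`, then the spectral norm satisfies
`‖I − β𝓛 − αH‖ ≤ 1 − μα`. -/
theorem iteration_matrix_contraction
    (N : ℕ) (𝓛 H : Matrix (Fin N) (Fin N) ℝ)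
    (h𝓛sym : 𝓛.IsSymm) (hHsym : H.IsSymm)
    (h𝓛psd : ∀ u : Fin N → ℝ, 0 ≤ u ⬝ᵥ (𝓛 *ᵥ u))
    (μ L : ℝ) (hμ : 0 < μ) (hμL : μ ≤ L)
    (hH : ∀ u : Fin N → ℝ, μ * (∑ i, u i ^ 2) ≤ u ⬝ᵥ (H *ᵥ u) ∧
      u ⬝ᵥ (H *ᵥ u) ≤ L * (∑ i, u i ^ 2))
    (α β : ℝ) (hα : 0 ≤ α) (hβ : 0 ≤ β) (hαμ : α * μ ≤ 1)
    (hsum : β * ‖Matrix.toEuclideanCLM (𝕜 := ℝ) (n := Fin N) 𝓛‖ + α * (L + μ) ≤ 2) :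
    ‖Matrix.toEuclideanCLM (𝕜 := ℝ) (n := Fin N) (1 - β • 𝓛 - α • H)‖ ≤ 1 - μ * α := by
  set M : Matrix (Fin N) (Fin N) ℝ := 1 - β • 𝓛 - α • H with hM
  have hMsym : Mᵀ = M := by
    simp [hM, Matrix.transpose_sub, Matrix.transpose_smul, h𝓛sym.eq, hHsym.eq]
  have hc : (0:ℝ) ≤ 1 - μ * α := by nlinarith
  refine sym_op_norm_le _ ?_ _ hc ?_
  · -- symmetry
    intro x y
    rw [real_inner_comm, inner_toEuclideanCLM, inner_toEuclideanCLM]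
    rw [Matrix.dotProduct_mulVec, ← Matrix.mulVec_transpose, hMsym, dotProduct_comm]
  · -- quadratic form bound
    intro x
    set u : Fin N → ℝ := (WithLp.equiv 2 (Fin N → ℝ)) x with hu
    have hqf : ⟪x, Matrix.toEuclideanCLM (𝕜 := ℝ) (n := Fin N) M x⟫ =
        u ⬝ᵥ u - β * (u ⬝ᵥ (𝓛 *ᵥ u)) - α * (u ⬝ᵥ (H *ᵥ u)) := by
      rw [inner_toEuclideanCLM]
      simp [hM, Matrix.sub_mulVec, Matrix.smul_mulVec, Matrix.one_mulVec,
        dotProduct_sub, dotProduct_smul, smul_eq_mul]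
      rfl
    have hnorm : u ⬝ᵥ u = ‖x‖ ^ 2 := by
      rw [← real_inner_self_eq_norm_sq]
      simp [PiLp.inner_apply, dotProduct, RCLike.inner_apply, hu]
      rw [EuclideanSpace.norm_sq_eq]; simp [sq]
    have hsq : ∑ i, u i ^ 2 = u ⬝ᵥ u := by
      simp [dotProduct, sq]
    obtain ⟨hH1, hH2⟩ := hH u
    have hL1 := h𝓛psd u
    have hL2 : u ⬝ᵥ (𝓛 *ᵥ u) ≤ ‖Matrix.toEuclideanCLM (𝕜 := ℝ) (n := Fin N) 𝓛‖ * ‖x‖ ^ 2 := by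
      have h1 : ⟪x, Matrix.toEuclideanCLM (𝕜 := ℝ) (n := Fin N) 𝓛 x⟫ =
          u ⬝ᵥ (𝓛 *ᵥ u) := inner_toEuclideanCLM N 𝓛 x x
      have h2 := real_inner_le_norm x (Matrix.toEuclideanCLM (𝕜 := ℝ) (n := Fin N) 𝓛 x)
      have h3 := (Matrix.toEuclideanCLM (𝕜 := ℝ) (n := Fin N) 𝓛).le_opNorm x
      nlinarith [norm_nonneg x]
    have hs : (0:ℝ) ≤ ‖x‖ ^ 2 := sq_nonneg _
    have hop : (0:ℝ) ≤ ‖Matrix.toEuclideanCLM (𝕜 := ℝ) (n := Fin N) 𝓛‖ := norm_nonneg _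
    rw [hqf, hnorm]
    rw [hsq, hnorm] at hH1 hH2
    rw [abs_le]
    constructor
    · nlinarith [mul_le_mul_of_nonneg_left hL2 hβ, mul_le_mul_of_nonneg_left hH2 hα,
        mul_le_mul_of_nonneg_right hsum hs]
    · nlinarith [mul_le_mul_of_nonneg_left hH1 hα, mul_nonneg hβ hL1]
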